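/- Assume that C is invertible over ℚ and that the Coxeter graph of C (the graph on {1,…,r} with an edge {j,k} whenever j ≠ k and C_{jk} ≠ 0) is a forest. Then for every Coxeter double word 𝐢, the 2r×2r exchange matrix B̃_𝐢 has full rank, i.e. is invertible over ℚ (Corollary 3.11(2)). -/

import Mathlib

open Classical

noncomputable section

/-- The indicator `δ_P` of a proposition, as a rational number. -/
def dd (P : Prop) : ℚ := if P then 1 else 0

/-- The exchange matrix `B̃_𝐢`, as a function of `a b : ℤ` (the meaningful entries are
those with `a, b ∈ Ĩ = {-r,…,-1,1,…,r}`).  Here `C` is the (generalized Cartan) matrix,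
`jm j = j₋`, `jp j = j₊` and `eps j = ε_j`. -/
def Btilde (C : ℕ → ℕ → ℤ) (jm jp : ℕ → ℕ) (eps : ℕ → ℚ) (a b : ℤ) : ℚ :=
  (C a.natAbs b.natAbs : ℚ) / 2 *
    (if a < 0 then
      (if b < 0 then
        eps b.natAbs * (dd (jm a.natAbs < jm b.natAbs ∧ jm b.natAbs < jp a.natAbs)
            + dd (jm a.natAbs < jp b.natAbs ∧ jp b.natAbs < jp a.natAbs))
          - eps a.natAbs * (dd (jm b.natAbs < jm a.natAbs ∧ jm a.natAbs < jp b.natAbs)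
            + dd (jm b.natAbs < jp a.natAbs ∧ jp a.natAbs < jp b.natAbs))
      else
        -(eps a.natAbs * (2 * dd (a.natAbs = b.natAbs) + dd (jm a.natAbs < jm b.natAbs)
            + dd (jp a.natAbs < jm b.natAbs) + dd (jp b.natAbs < jm a.natAbs)
            + dd (jp b.natAbs < jp a.natAbs))
          + eps b.natAbs * (dd (jm a.natAbs < jm b.natAbs ∧ jm b.natAbs < jp a.natAbs)
            + dd (jm a.natAbs < jp b.natAbs ∧ jp b.natAbs < jp a.natAbs))))
    else
      (if b < 0 then
        eps b.natAbs * (2 * dd (a.natAbs = b.natAbs) + dd (jm b.natAbs < jm a.natAbs)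
            + dd (jp b.natAbs < jm a.natAbs) + dd (jp a.natAbs < jm b.natAbs)
            + dd (jp a.natAbs < jp b.natAbs))
          + eps a.natAbs * (dd (jm b.natAbs < jm a.natAbs ∧ jm a.natAbs < jp b.natAbs)
            + dd (jm b.natAbs < jp a.natAbs ∧ jp a.natAbs < jp b.natAbs))
      else
        eps a.natAbs * (dd (jm a.natAbs < jm b.natAbs) + dd (jp a.natAbs < jm b.natAbs)
            + dd (jp b.natAbs < jm a.natAbs) + dd (jp b.natAbs < jp a.natAbs))
          - eps b.natAbs * (dd (jm b.natAbs < jm a.natAbs) + dd (jp b.natAbs < jm a.natAbs)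
            + dd (jp a.natAbs < jm b.natAbs) + dd (jp a.natAbs < jp b.natAbs))))

/-- `w` is a Coxeter double word: the positions `1,…,2r` are mapped bijectively onto
`Ĩ = {-r,…,-1,1,…,r}`. -/
def IsCoxWord (r : ℕ) (w : ℕ → ℤ) : Prop :=
  (∀ m, 1 ≤ m → m ≤ 2 * r → w m ≠ 0 ∧ (w m).natAbs ≤ r) ∧
    ∀ a : ℤ, a ≠ 0 → a.natAbs ≤ r → ∃! m, 1 ≤ m ∧ m ≤ 2 * r ∧ w m = a

/-- `jm j = j₋ < j₊ = jp j` are the two positions of the word `w` carrying a letter of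
absolute value `j`, and `eps j = ε_j = 1` if `w j₋ > 0` and `-1` otherwise. -/
def PosData (r : ℕ) (w : ℕ → ℤ) (jm jp : ℕ → ℕ) (eps : ℕ → ℚ) : Prop :=
  ∀ j, 1 ≤ j → j ≤ r →
    1 ≤ jm j ∧ jm j < jp j ∧ jp j ≤ 2 * r ∧
      (w (jm j)).natAbs = j ∧ (w (jp j)).natAbs = j ∧
      eps j = (if 0 < w (jm j) then 1 else -1)

/-- `C` is an `r × r` generalized Cartan matrix (on the indices `1,…,r`). -/
def IsGCM (r : ℕ) (C : ℕ → ℕ → ℤ) : Prop :=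
  (∀ j, 1 ≤ j → j ≤ r → C j j = 2) ∧
    (∀ j k, 1 ≤ j → j ≤ r → 1 ≤ k → k ≤ r → j ≠ k → C j k ≤ 0) ∧
    (∀ j k, 1 ≤ j → j ≤ r → 1 ≤ k → k ≤ r → (C j k = 0 ↔ C k j = 0))

/-- Matrix mutation at the index `m`:
`μ_m(B)_{a,b} = -B_{a,b}` if `a = m` or `b = m`, and otherwise
`μ_m(B)_{a,b} = B_{a,b} + sgn(B_{a,m})·max(B_{a,m}·B_{m,b}, 0)`. -/
def mutB (m : ℤ) (B : ℤ → ℤ → ℚ) : ℤ → ℤ → ℚ := fun a b =>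
  if a = m ∨ b = m then -B a b
  else B a b +
    (if 0 < B a m then (1 : ℚ) else if B a m < 0 then -1 else 0) * max (B a m * B m b) 0

/-- The Coxeter graph of `C`: the (simple) graph on `{1,…,r}` with an edge `{j,k}`
whenever `j ≠ k` and `C_{jk} ≠ 0` (equivalently, by the GCM axioms, `C_{kj} ≠ 0`). -/
def coxGraph (r : ℕ) (C : ℕ → ℕ → ℤ) : SimpleGraph ℕ where
  Adj j k := j ≠ k ∧ 1 ≤ j ∧ j ≤ r ∧ 1 ≤ k ∧ k ≤ r ∧ (C j k ≠ 0 ∨ C k j ≠ 0)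
  symm := by
    constructor
    rintro j k ⟨h1, h2, h3, h4, h5, h6⟩
    exact ⟨h1.symm, h4, h5, h2, h3, h6.symm⟩
  loopless := by
    constructor
    intro j h
    exact h.1 rfl

/-- The enumeration `Fin (2r) → Ĩ`, `m ↦ -(m+1)` for `m < r` and `m ↦ m - r + 1` for
`m ≥ r`. -/
def iotaI (r : ℕ) (m : Fin (2 * r)) : ℤ :=
  if (m : ℕ) < r then -(((m : ℕ) : ℤ) + 1) else (((m : ℕ) - r : ℕ) : ℤ) + 1

def BtildeQ (C : ℕ → ℕ → ℚ) (jm jp : ℕ → ℕ) (eps : ℕ → ℚ) (a b : ℤ) : ℚ :=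
  C a.natAbs b.natAbs / 2 *
    (if a < 0 then
      (if b < 0 then
        eps b.natAbs * (dd (jm a.natAbs < jm b.natAbs ∧ jm b.natAbs < jp a.natAbs)
            + dd (jm a.natAbs < jp b.natAbs ∧ jp b.natAbs < jp a.natAbs))
          - eps a.natAbs * (dd (jm b.natAbs < jm a.natAbs ∧ jm a.natAbs < jp b.natAbs)
            + dd (jm b.natAbs < jp a.natAbs ∧ jp a.natAbs < jp b.natAbs))
      else
        -(eps a.natAbs * (2 * dd (a.natAbs = b.natAbs) + dd (jm a.natAbs < jm b.natAbs)
            + dd (jp a.natAbs < jm b.natAbs) + dd (jp b.natAbs < jm a.natAbs)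
            + dd (jp b.natAbs < jp a.natAbs))
          + eps b.natAbs * (dd (jm a.natAbs < jm b.natAbs ∧ jm b.natAbs < jp a.natAbs)
            + dd (jm a.natAbs < jp b.natAbs ∧ jp b.natAbs < jp a.natAbs))))
    else
      (if b < 0 then
        eps b.natAbs * (2 * dd (a.natAbs = b.natAbs) + dd (jm b.natAbs < jm a.natAbs)
            + dd (jp b.natAbs < jm a.natAbs) + dd (jp a.natAbs < jm b.natAbs)
            + dd (jp a.natAbs < jp b.natAbs))
          + eps a.natAbs * (dd (jm b.natAbs < jm a.natAbs ∧ jm a.natAbs < jp b.natAbs)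
            + dd (jm b.natAbs < jp a.natAbs ∧ jp a.natAbs < jp b.natAbs))
      else
        eps a.natAbs * (dd (jm a.natAbs < jm b.natAbs) + dd (jp a.natAbs < jm b.natAbs)
            + dd (jp b.natAbs < jm a.natAbs) + dd (jp b.natAbs < jp a.natAbs))
          - eps b.natAbs * (dd (jm b.natAbs < jm a.natAbs) + dd (jp b.natAbs < jm a.natAbs)
            + dd (jp a.natAbs < jm b.natAbs) + dd (jp a.natAbs < jp b.natAbs))))

variable {C : ℕ → ℕ → ℚ} {jm jp : ℕ → ℕ} {eps : ℕ → ℚ}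

lemma BtildeQ_zero {a b : ℤ} (h : C a.natAbs b.natAbs = 0) :
    BtildeQ C jm jp eps a b = 0 := by
  unfold BtildeQ; rw [h]; ring

lemma BtildeQ_nn {l : ℕ} (hl : 1 ≤ l) :
    BtildeQ C jm jp eps (-(l:ℤ)) (-(l:ℤ)) = 0 := by
  have h1 : (-(l:ℤ)) < 0 := by omega
  unfold BtildeQ
  simp only [Int.natAbs_neg, Int.natAbs_natCast, if_pos h1, dd]
  have : ¬ (jm l < jm l) := by omega
  simp [this]

lemma BtildeQ_pp {l : ℕ} (hl : 1 ≤ l) :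
    BtildeQ C jm jp eps ((l:ℤ)) ((l:ℤ)) = 0 := by
  have h1 : ¬ ((l:ℤ) < 0) := by omega
  unfold BtildeQ
  simp only [Int.natAbs_natCast, if_neg h1, dd]
  ring

lemma BtildeQ_np {l : ℕ} (hl : 1 ≤ l) (hord : jm l < jp l) :
    BtildeQ C jm jp eps (-(l:ℤ)) ((l:ℤ)) = -(eps l * C l l) := by
  have h1 : (-(l:ℤ)) < 0 := by omega
  have h2 : ¬ ((l:ℤ) < 0) := by omega
  unfold BtildeQ
  simp only [Int.natAbs_neg, Int.natAbs_natCast, if_pos h1, if_neg h2, dd]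
  have e1 : ¬ (jm l < jm l) := by omega
  have e2 : ¬ (jp l < jm l) := by omega
  have e3 : ¬ (jp l < jp l) := by omega
  simp [e1, e2, e3]
  ring

lemma BtildeQ_pn {l : ℕ} (hl : 1 ≤ l) (hord : jm l < jp l) :
    BtildeQ C jm jp eps ((l:ℤ)) (-(l:ℤ)) = eps l * C l l := by
  have h1 : (-(l:ℤ)) < 0 := by omega
  have h2 : ¬ ((l:ℤ) < 0) := by omega
  unfold BtildeQ
  simp only [Int.natAbs_neg, Int.natAbs_natCast, if_neg h2, if_pos h1, dd]
  have e1 : ¬ (jm l < jm l) := by omega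
  have e2 : ¬ (jp l < jm l) := by omega
  have e3 : ¬ (jp l < jp l) := by omega
  simp [e1, e2, e3]
  ring
set_option maxHeartbeats 1000000 in
lemma core (C : ℕ → ℕ → ℚ) (jm jp : ℕ → ℕ) (eps : ℕ → ℚ) (l k : ℕ)
    (hl : 1 ≤ l) (hk : 1 ≤ k) (hlk : l ≠ k)
    (hordl : jm l < jp l) (hordk : jm k < jp k)
    (d1 : jm l ≠ jm k) (d2 : jm l ≠ jp k) (d3 : jp l ≠ jm k) (d4 : jp l ≠ jp k)
    (hel : eps l = 1 ∨ eps l = -1) (hek : eps k = 1 ∨ eps k = -1) :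
    (BtildeQ C jm jp eps (-(k:ℤ)) (-(l:ℤ)) * BtildeQ C jm jp eps ((l:ℤ)) (-(k:ℤ))
      - BtildeQ C jm jp eps (-(k:ℤ)) ((l:ℤ)) * BtildeQ C jm jp eps (-(l:ℤ)) (-(k:ℤ)) = 0) ∧
    (BtildeQ C jm jp eps (-(k:ℤ)) (-(l:ℤ)) * BtildeQ C jm jp eps ((l:ℤ)) ((k:ℤ))
      - BtildeQ C jm jp eps (-(k:ℤ)) ((l:ℤ)) * BtildeQ C jm jp eps (-(l:ℤ)) ((k:ℤ))
      = -(eps l * eps k * C k l * C l k)) ∧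
    (BtildeQ C jm jp eps ((k:ℤ)) (-(l:ℤ)) * BtildeQ C jm jp eps ((l:ℤ)) (-(k:ℤ))
      - BtildeQ C jm jp eps ((k:ℤ)) ((l:ℤ)) * BtildeQ C jm jp eps (-(l:ℤ)) (-(k:ℤ))
      = eps l * eps k * C k l * C l k) ∧
    (BtildeQ C jm jp eps ((k:ℤ)) (-(l:ℤ)) * BtildeQ C jm jp eps ((l:ℤ)) ((k:ℤ))
      - BtildeQ C jm jp eps ((k:ℤ)) ((l:ℤ)) * BtildeQ C jm jp eps (-(l:ℤ)) ((k:ℤ)) = 0) := by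
  have hkl : k ≠ l := fun h => hlk h.symm
  have i1 : (-(k:ℤ)) < 0 := by omega
  have i2 : ¬ ((k:ℤ) < 0) := by omega
  have i3 : (-(l:ℤ)) < 0 := by omega
  have i4 : ¬ ((l:ℤ) < 0) := by omega
  have h6 : (jm l < jm k ∧ jm l < jp k ∧ jp l < jm k ∧ jp l < jp k) ∨ (jm k < jm l ∧ jm k < jp l ∧ jp k < jm l ∧ jp k < jp l) ∨ (jm l < jm k ∧ jm l < jp k ∧ jm k < jp l ∧ jp k < jp l) ∨ (jm k < jm l ∧ jm l < jp k ∧ jm k < jp l ∧ jp l < jp k) ∨ (jm l < jm k ∧ jm l < jp k ∧ jm k < jp l ∧ jp l < jp k) ∨ (jm k < jm l ∧ jm l < jp k ∧ jm k < jp l ∧ jp k < jp l) := by omega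
  clear d1 d2 d3 d4
  rcases h6 with ⟨hA,hB,hC,hD⟩|⟨hA,hB,hC,hD⟩|⟨hA,hB,hC,hD⟩|⟨hA,hB,hC,hD⟩|⟨hA,hB,hC,hD⟩|⟨hA,hB,hC,hD⟩
  · refine ⟨?_, ?_, ?_, ?_⟩ <;>
    · simp only [BtildeQ, dd, Int.natAbs_neg, Int.natAbs_natCast, hA, hB, hC, hD,
        hlk, hkl, i1, i2, i3, i4,
        (show ¬ (jm k < jm l) by omega),
      (show ¬ (jp k < jm l) by omega),
      (show ¬ (jm k < jp l) by omega),
      (show ¬ (jp k < jp l) by omega),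
        (show ¬ (jp l < jm l) by omega), (show ¬ (jp k < jm k) by omega),
        if_true, if_false, and_true, true_and, and_false, false_and,
        iff_true, iff_false, not_false_iff, eq_self_iff_true]
      rcases hel with hel|hel <;> rcases hek with hek|hek <;> rw [hel, hek] <;> ring
  · refine ⟨?_, ?_, ?_, ?_⟩ <;>
    · simp only [BtildeQ, dd, Int.natAbs_neg, Int.natAbs_natCast, hA, hB, hC, hD,
        hlk, hkl, i1, i2, i3, i4,
        (show ¬ (jm l < jm k) by omega),
      (show ¬ (jp l < jm k) by omega),
      (show ¬ (jm l < jp k) by omega),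
      (show ¬ (jp l < jp k) by omega),
        (show ¬ (jp l < jm l) by omega), (show ¬ (jp k < jm k) by omega),
        if_true, if_false, and_true, true_and, and_false, false_and,
        iff_true, iff_false, not_false_iff, eq_self_iff_true]
      rcases hel with hel|hel <;> rcases hek with hek|hek <;> rw [hel, hek] <;> ring
  · refine ⟨?_, ?_, ?_, ?_⟩ <;>
    · simp only [BtildeQ, dd, Int.natAbs_neg, Int.natAbs_natCast, hA, hB, hC, hD,
        hlk, hkl, i1, i2, i3, i4,
        (show ¬ (jm k < jm l) by omega),
      (show ¬ (jp k < jm l) by omega),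
      (show ¬ (jp l < jm k) by omega),
      (show ¬ (jp l < jp k) by omega),
        (show ¬ (jp l < jm l) by omega), (show ¬ (jp k < jm k) by omega),
        if_true, if_false, and_true, true_and, and_false, false_and,
        iff_true, iff_false, not_false_iff, eq_self_iff_true]
      rcases hel with hel|hel <;> rcases hek with hek|hek <;> rw [hel, hek] <;> ring
  · refine ⟨?_, ?_, ?_, ?_⟩ <;>
    · simp only [BtildeQ, dd, Int.natAbs_neg, Int.natAbs_natCast, hA, hB, hC, hD,
        hlk, hkl, i1, i2, i3, i4,
        (show ¬ (jm l < jm k) by omega),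
      (show ¬ (jp k < jm l) by omega),
      (show ¬ (jp l < jm k) by omega),
      (show ¬ (jp k < jp l) by omega),
        (show ¬ (jp l < jm l) by omega), (show ¬ (jp k < jm k) by omega),
        if_true, if_false, and_true, true_and, and_false, false_and,
        iff_true, iff_false, not_false_iff, eq_self_iff_true]
      rcases hel with hel|hel <;> rcases hek with hek|hek <;> rw [hel, hek] <;> ring
  · refine ⟨?_, ?_, ?_, ?_⟩ <;>
    · simp only [BtildeQ, dd, Int.natAbs_neg, Int.natAbs_natCast, hA, hB, hC, hD,
        hlk, hkl, i1, i2, i3, i4,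
        (show ¬ (jm k < jm l) by omega),
      (show ¬ (jp k < jm l) by omega),
      (show ¬ (jp l < jm k) by omega),
      (show ¬ (jp k < jp l) by omega),
        (show ¬ (jp l < jm l) by omega), (show ¬ (jp k < jm k) by omega),
        if_true, if_false, and_true, true_and, and_false, false_and,
        iff_true, iff_false, not_false_iff, eq_self_iff_true]
      rcases hel with hel|hel <;> rcases hek with hek|hek <;> rw [hel, hek] <;> ring
  · refine ⟨?_, ?_, ?_, ?_⟩ <;>
    · simp only [BtildeQ, dd, Int.natAbs_neg, Int.natAbs_natCast, hA, hB, hC, hD,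
        hlk, hkl, i1, i2, i3, i4,
        (show ¬ (jm l < jm k) by omega),
      (show ¬ (jp k < jm l) by omega),
      (show ¬ (jp l < jm k) by omega),
      (show ¬ (jp l < jp k) by omega),
        (show ¬ (jp l < jm l) by omega), (show ¬ (jp k < jm k) by omega),
        if_true, if_false, and_true, true_and, and_false, false_and,
        iff_true, iff_false, not_false_iff, eq_self_iff_true]
      rcases hel with hel|hel <;> rcases hek with hek|hek <;> rw [hel, hek] <;> ring

open SimpleGraph in
lemma walk_support_mem {G : SimpleGraph ℕ} {S : Finset ℕ}
    (hsupp : ∀ a b, G.Adj a b → a ∈ S) :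
    ∀ {u v : ℕ} (p : G.Walk u v), 1 ≤ p.length → ∀ x ∈ p.support, x ∈ S := by
  intro u v p
  induction p with
  | nil => intro h; simp at h
  | cons h q ih =>
    intro _ x hx
    rw [SimpleGraph.Walk.support_cons] at hx
    rcases List.mem_cons.mp hx with rfl | hx
    · exact hsupp _ _ h
    · cases q with
      | nil => simp at hx; subst hx; exact hsupp _ _ h.symm
      | cons h' q' => exact ih (by simp [SimpleGraph.Walk.length_cons]) x hx

open SimpleGraph in
lemma exists_leaf (G : SimpleGraph ℕ) (hG : G.IsAcyclic) (S : Finset ℕ)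
    (hsupp : ∀ a b, G.Adj a b → a ∈ S) (hne : S.Nonempty) :
    ∃ l ∈ S, ∀ k1 k2, G.Adj l k1 → G.Adj l k2 → k1 = k2 := by
  by_cases hE : ∀ a b, ¬ G.Adj a b
  · obtain ⟨l, hl⟩ := hne
    exact ⟨l, hl, fun k1 k2 h1 _ => absurd h1 (hE _ _)⟩
  · push_neg at hE
    obtain ⟨x, y, hxy⟩ := hE
    set L : Set ℕ := {n | ∃ u v : ℕ, ∃ p : G.Walk u v, p.IsPath ∧ p.length = n} with hL
    have hbdd : BddAbove L := by
      refine ⟨S.card, fun n hn => ?_⟩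
      obtain ⟨u, v, p, hp, rfl⟩ := hn
      rcases Nat.eq_zero_or_pos p.length with h0 | h1
      · omega
      · have hsub : p.support.toFinset ⊆ S := by
          intro z hz
          exact walk_support_mem hsupp p h1 z (List.mem_toFinset.mp hz)
        have hcard : p.support.toFinset.card = p.length + 1 := by
          rw [List.toFinset_card_of_nodup hp.support_nodup, Walk.length_support]
        have := Finset.card_le_card hsub
        omega
    have hmem1 : 1 ∈ L := ⟨x, y, Walk.cons hxy Walk.nil, by
      constructor
      · rw [Walk.cons_isPath_iff]
        exact ⟨Walk.IsPath.nil, by simp [G.ne_of_adj hxy]⟩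
      · simp⟩
    have hsup_mem := Nat.sSup_mem ⟨1, hmem1⟩ hbdd
    obtain ⟨u, v, p, hp, hlen⟩ := hsup_mem
    have hlen1 : 1 ≤ p.length := by
      have := le_csSup hbdd hmem1
      omega
    have huS : u ∈ S := by
      have := walk_support_mem hsupp p hlen1 u p.start_mem_support
      exact this
    refine ⟨u, huS, ?_⟩
    have key : ∀ w, G.Adj u w → w = p.getVert 1 := by
      intro w hw
      have hwsup : w ∈ p.support := by
        by_contra hns
        have hpath : (Walk.cons hw.symm p).IsPath := by
          rw [Walk.cons_isPath_iff]; exact ⟨hp, hns⟩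
        have hmem : p.length + 1 ∈ L := ⟨w, v, Walk.cons hw.symm p, hpath, by simp⟩
        have := le_csSup hbdd hmem
        omega
      have huw : u ≠ w := G.ne_of_adj hw
      set q := p.takeUntil w hwsup with hq
      have hqp : q.IsPath := hp.takeUntil hwsup
      have hsingle : (⟨q, hqp⟩ : G.Path u w) = Path.singleton hw :=
        hG.path_unique _ _
      have hq' : q = Walk.cons hw Walk.nil := by
        have := congrArg Subtype.val hsingle
        simpa [Path.singleton] using this
      have hspec := p.take_spec hwsup
      rw [← hq] at hspec
      rw [hq'] at hspec
      rw [← hspec]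
      simp [Walk.getVert_cons_succ]
    intro k1 k2 h1 h2
    rw [key k1 h1, key k2 h2]

lemma BtildeQ_congr {C C' : ℕ → ℕ → ℚ} {jm jp : ℕ → ℕ} {eps : ℕ → ℚ} {a b : ℤ}
    (h : C a.natAbs b.natAbs = C' a.natAbs b.natAbs) :
    BtildeQ C jm jp eps a b = BtildeQ C' jm jp eps a b := by
  unfold BtildeQ; rw [h]

def graphOf (S : Finset ℕ) (C : ℕ → ℕ → ℚ) : SimpleGraph ℕ where
  Adj j k := j ≠ k ∧ j ∈ S ∧ k ∈ S ∧ (C j k ≠ 0 ∨ C k j ≠ 0)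
  symm := by constructor; rintro j k ⟨h1, h2, h3, h4⟩; exact ⟨h1.symm, h3, h2, h4.symm⟩
  loopless := by constructor; intro j h; exact h.1 rfl

lemma acyclic_mono {G G' : SimpleGraph ℕ} (h : G ≤ G') (hG' : G'.IsAcyclic) : G.IsAcyclic :=
  fun _v c hc => hG' (c.mapLe h) (hc.mapLe h)

lemma key (jm jp : ℕ → ℕ) (eps : ℕ → ℚ) :
    ∀ (S : Finset ℕ) (C : ℕ → ℕ → ℚ),
    (∀ j ∈ S, 1 ≤ j) →
    (∀ j ∈ S, eps j = 1 ∨ eps j = -1) →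
    (∀ j ∈ S, jm j < jp j) →
    (∀ j ∈ S, ∀ k ∈ S, j ≠ k →
       jm j ≠ jm k ∧ jm j ≠ jp k ∧ jp j ≠ jm k ∧ jp j ≠ jp k) →
    (∀ j ∈ S, ∀ k ∈ S, (C j k = 0 ↔ C k j = 0)) →
    (graphOf S C).IsAcyclic →
    (∀ u : ℕ → ℚ, (∀ j ∈ S, ∑ k ∈ S, C j k * u k = 0) → ∀ j ∈ S, u j = 0) →
    ∀ v : ℤ → ℚ,
    (∀ a : ℤ, a.natAbs ∈ S →
      ∑ j ∈ S, (BtildeQ C jm jp eps a (-(j:ℤ)) * v (-(j:ℤ))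
        + BtildeQ C jm jp eps a ((j:ℤ)) * v ((j:ℤ))) = 0) →
    ∀ a : ℤ, a.natAbs ∈ S → v a = 0 := by
  intro S
  induction S using Finset.strongInduction with
  | _ S IH =>
  intro C hge1 heps hord hdisj hzero hacyc hCinj v hv a ha
  have hSne : S.Nonempty := ⟨a.natAbs, ha⟩
  obtain ⟨l, hlS, hleaf⟩ := exists_leaf (graphOf S C) hacyc S (fun _ _ hab => hab.2.1) hSne
  have hl1 : 1 ≤ l := hge1 l hlS
  have hordl : jm l < jp l := hord l hlS
  have hepsl : eps l = 1 ∨ eps l = -1 := heps l hlS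
  have hepsl_ne : eps l ≠ 0 := by rcases hepsl with h|h <;> rw [h] <;> norm_num
  have hent0 : ∀ (b : ℤ) (j : ℕ), C b.natAbs j = 0 →
      BtildeQ C jm jp eps b (-(j:ℤ)) * v (-(j:ℤ))
        + BtildeQ C jm jp eps b ((j:ℤ)) * v ((j:ℤ)) = 0 := by
    intro b j h
    rw [BtildeQ_zero (by simpa using h), BtildeQ_zero (by simpa using h)]
    ring
  by_cases hnb : ∃ k, (graphOf S C).Adj l k
  · -- l has a (unique) neighbour k
    obtain ⟨k, hadj⟩ := hnb
    have hlk : l ≠ k := hadj.1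
    have hkS : k ∈ S := hadj.2.2.1
    have hk1 : 1 ≤ k := hge1 k hkS
    have hordk : jm k < jp k := hord k hkS
    have hepsk : eps k = 1 ∨ eps k = -1 := heps k hkS
    have hepsk_ne : eps k ≠ 0 := by rcases hepsk with h|h <;> rw [h] <;> norm_num
    have hiff := hzero l hlS k hkS
    have hClk : C l k ≠ 0 ∧ C k l ≠ 0 := by
      rcases hadj.2.2.2 with h|h
      · exact ⟨h, fun h' => h (hiff.mpr h')⟩
      · exact ⟨fun h' => h (hiff.mp h'), h⟩
    have hnbr : ∀ j ∈ S, j ≠ l → j ≠ k → C l j = 0 ∧ C j l = 0 := by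
      intro j hj hjl hjk
      have hno : ¬ (graphOf S C).Adj l j := fun h => hjk (hleaf j k h hadj)
      have : ¬ (C l j ≠ 0 ∨ C j l ≠ 0) := fun hc => hno ⟨Ne.symm hjl, hlS, hj, hc⟩
      rcases not_or.mp this with ⟨h1, h2⟩
      exact ⟨not_not.mp h1, not_not.mp h2⟩
    obtain ⟨d1, d2, d3, d4⟩ := hdisj l hlS k hkS hlk
    obtain ⟨hK1, hK2, hK3, hK4⟩ :=
      core C jm jp eps l k hl1 hk1 hlk hordl hordk d1 d2 d3 d4 hepsl hepsk
    have hsplit : ∀ (F : ℕ → ℚ), (∀ j ∈ S, j ≠ l → j ≠ k → F j = 0) →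
        ∑ j ∈ S, F j = F l + F k := by
      intro F hF
      rw [← Finset.add_sum_erase S F hlS,
        ← Finset.add_sum_erase _ F (Finset.mem_erase.mpr ⟨Ne.symm hlk, hkS⟩)]
      rw [Finset.sum_eq_zero (fun j hj => by
        rcases Finset.mem_erase.mp hj with ⟨hjk, hj'⟩
        rcases Finset.mem_erase.mp hj' with ⟨hjl, hjS⟩
        exact hF j hjS hjl hjk)]
      ring
    have R1 : BtildeQ C jm jp eps (-(l:ℤ)) (-(k:ℤ)) * v (-(k:ℤ))
        + BtildeQ C jm jp eps (-(l:ℤ)) ((k:ℤ)) * v ((k:ℤ))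
        = eps l * C l l * v ((l:ℤ)) := by
      have h := hv (-(l:ℤ)) (by simpa using hlS)
      rw [hsplit _ (fun j hj hjl hjk => hent0 _ j (by
        simpa using (hnbr j hj hjl hjk).1))] at h
      rw [BtildeQ_nn hl1, BtildeQ_np hl1 hordl] at h
      linear_combination h
    have R2 : eps l * C l l * v (-(l:ℤ))
        + BtildeQ C jm jp eps ((l:ℤ)) (-(k:ℤ)) * v (-(k:ℤ))
        + BtildeQ C jm jp eps ((l:ℤ)) ((k:ℤ)) * v ((k:ℤ)) = 0 := by
      have h := hv ((l:ℤ)) (by simpa using hlS)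
      rw [hsplit _ (fun j hj hjl hjk => hent0 _ j (by
        simpa using (hnbr j hj hjl hjk).1))] at h
      rw [BtildeQ_pp hl1, BtildeQ_pn hl1 hordl] at h
      linear_combination h
    by_cases hdl : C l l = 0
    · -- d_l = 0 : eliminate both l and k
      rw [hdl] at R1 R2
      have r1 : BtildeQ C jm jp eps (-(l:ℤ)) (-(k:ℤ)) * v (-(k:ℤ))
          + BtildeQ C jm jp eps (-(l:ℤ)) ((k:ℤ)) * v ((k:ℤ)) = 0 := by
        linear_combination R1
      have r2 : BtildeQ C jm jp eps ((l:ℤ)) (-(k:ℤ)) * v (-(k:ℤ))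
          + BtildeQ C jm jp eps ((l:ℤ)) ((k:ℤ)) * v ((k:ℤ)) = 0 := by
        linear_combination R2
      have hcc : C k l * C l k ≠ 0 := mul_ne_zero hClk.2 hClk.1
      have hee : eps l * eps k ≠ 0 := mul_ne_zero hepsl_ne hepsk_ne
      have heecc : eps l * eps k * C k l * C l k ≠ 0 := by
        intro h
        apply hcc
        have h2 : (eps l * eps k) * (C k l * C l k) = 0 := by linear_combination h
        rcases mul_eq_zero.mp h2 with h'|h'
        · exact absurd h' hee
        · exact h'
      have hvk : v ((k:ℤ)) = 0 := by
        have hX : -(eps l * eps k * C k l * C l k) * v ((k:ℤ)) = 0 := by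
          linear_combination BtildeQ C jm jp eps (-(k:ℤ)) (-(l:ℤ)) * r2
            - BtildeQ C jm jp eps (-(k:ℤ)) ((l:ℤ)) * r1
            - v (-(k:ℤ)) * hK1 - v ((k:ℤ)) * hK2
        rcases mul_eq_zero.mp hX with h'|h'
        · exact absurd h' (neg_ne_zero.mpr heecc)
        · exact h'
      have hvnk : v (-(k:ℤ)) = 0 := by
        have hX : (eps l * eps k * C k l * C l k) * v (-(k:ℤ)) = 0 := by
          linear_combination BtildeQ C jm jp eps ((k:ℤ)) (-(l:ℤ)) * r2
            - BtildeQ C jm jp eps ((k:ℤ)) ((l:ℤ)) * r1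
            - v (-(k:ℤ)) * hK3 - v ((k:ℤ)) * hK4
        rcases mul_eq_zero.mp hX with h'|h'
        · exact absurd h' heecc
        · exact h'
      set S'' := (S.erase l).erase k with hS''
      have hsub'' : S'' ⊆ S := fun x hx =>
        Finset.mem_of_mem_erase (Finset.mem_of_mem_erase hx)
      have hmem'' : ∀ j, j ∈ S'' ↔ (j ≠ k ∧ j ≠ l ∧ j ∈ S) := by
        intro j
        simp [hS'', Finset.mem_erase, and_assoc]
      have hss'' : S'' ⊂ S := by
        refine (Finset.ssubset_iff_of_subset hsub'').mpr ⟨l, hlS, ?_⟩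
        simp [hmem'']
      have hv'' : ∀ b : ℤ, b.natAbs ∈ S'' →
          ∑ j ∈ S'', (BtildeQ C jm jp eps b (-(j:ℤ)) * v (-(j:ℤ))
            + BtildeQ C jm jp eps b ((j:ℤ)) * v ((j:ℤ))) = 0 := by
        intro b hb
        rcases (hmem'' _).mp hb with ⟨hbk, hbl, hbS⟩
        have h := hv b hbS
        rw [← Finset.add_sum_erase S _ hlS,
          ← Finset.add_sum_erase _ _ (Finset.mem_erase.mpr ⟨Ne.symm hlk, hkS⟩)] at h
        rw [hent0 b l ((hnbr _ hbS hbl hbk).2)] at h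
        rw [hvk, hvnk] at h
        rw [← hS''] at h
        linear_combination h
      have hCinj'' : ∀ u : ℕ → ℚ,
          (∀ j ∈ S'', ∑ k' ∈ S'', C j k' * u k' = 0) → ∀ j ∈ S'', u j = 0 := by
        intro u hu
        set u' : ℕ → ℚ := fun m =>
          if m = l then -(1 / C k l) * ∑ m' ∈ S'', C k m' * u m'
          else if m = k then 0 else u m with hu'
        have hu'S'' : ∀ m ∈ S'', u' m = u m := by
          intro m hm
          rcases (hmem'' _).mp hm with ⟨hmk, hml, _⟩
          simp [hu', hml, hmk]
        have hrows : ∀ j ∈ S, ∑ m ∈ S, C j m * u' m = 0 := by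
          intro j hj
          have hsplitC : ∑ m ∈ S, C j m * u' m
              = C j l * u' l + (C j k * u' k + ∑ m ∈ S'', C j m * u' m) := by
            rw [← Finset.add_sum_erase S _ hlS,
              ← Finset.add_sum_erase _ _ (Finset.mem_erase.mpr ⟨Ne.symm hlk, hkS⟩), hS'']
          have hu'l : u' l = -(1 / C k l) * ∑ m' ∈ S'', C k m' * u m' := by simp [hu']
          have hu'k : u' k = 0 := by simp [hu', Ne.symm hlk]
          have hsum'' : ∑ m ∈ S'', C j m * u' m = ∑ m ∈ S'', C j m * u m :=
            Finset.sum_congr rfl (fun m hm => by rw [hu'S'' m hm])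
          rw [hsplitC, hu'k, hu'l, hsum'']
          by_cases hjl : j = l
          · have hzs : ∑ m ∈ S'', C j m * u m = 0 :=
              Finset.sum_eq_zero (fun m hm => by
                rcases (hmem'' _).mp hm with ⟨hmk, hml, hmS⟩
                rw [hjl, (hnbr m hmS hml hmk).1]; ring)
            rw [hzs, hjl, hdl]
            ring
          · by_cases hjk : j = k
            · rw [hjk]
              field_simp [hClk.2]
              ring
            · rw [(hnbr j hj hjl hjk).2]
              rw [hu j ((hmem'' _).mpr ⟨hjk, hjl, hj⟩)]
              ring
        intro j hj
        have := hCinj u' hrows j (hsub'' hj)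
        rwa [hu'S'' j hj] at this
      have hle'' : graphOf S'' C ≤ graphOf S C := by
        intro x y hxy
        obtain ⟨h1, h2, h3, h4⟩ := hxy
        exact ⟨h1, hsub'' h2, hsub'' h3, h4⟩
      have IH'' := IH S'' hss'' C
        (fun j hj => hge1 j (hsub'' hj)) (fun j hj => heps j (hsub'' hj))
        (fun j hj => hord j (hsub'' hj))
        (fun j hj k' hk' => hdisj j (hsub'' hj) k' (hsub'' hk'))
        (fun j hj k' hk' => hzero j (hsub'' hj) k' (hsub'' hk'))
        (acyclic_mono hle'' hacyc) hCinj'' v hv''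
      have hq : ∀ b : ℤ, b.natAbs = k →
          BtildeQ C jm jp eps b (-(l:ℤ)) * v (-(l:ℤ))
            + BtildeQ C jm jp eps b ((l:ℤ)) * v ((l:ℤ)) = 0 := by
        intro b hb
        have h := hv b (by rw [hb]; exact hkS)
        rw [← Finset.add_sum_erase S _ hlS,
          ← Finset.add_sum_erase _ _ (Finset.mem_erase.mpr ⟨Ne.symm hlk, hkS⟩)] at h
        rw [hvk, hvnk] at h
        rw [Finset.sum_eq_zero (fun j hj => by
          have hj' : j ∈ S'' := by rw [hS'']; exact hj
          rw [IH'' (-(j:ℤ)) (by simpa using hj'), IH'' ((j:ℤ)) (by simpa using hj')]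
          ring)] at h
        linear_combination h
      have q1 := hq (-(k:ℤ)) (by simp)
      have q2 := hq ((k:ℤ)) (by simp)
      have hprod : (BtildeQ C jm jp eps (-(k:ℤ)) (-(l:ℤ)) * BtildeQ C jm jp eps ((k:ℤ)) ((l:ℤ))
          - BtildeQ C jm jp eps (-(k:ℤ)) ((l:ℤ)) * BtildeQ C jm jp eps ((k:ℤ)) (-(l:ℤ)))
          * (BtildeQ C jm jp eps (-(l:ℤ)) (-(k:ℤ)) * BtildeQ C jm jp eps ((l:ℤ)) ((k:ℤ))
          - BtildeQ C jm jp eps (-(l:ℤ)) ((k:ℤ)) * BtildeQ C jm jp eps ((l:ℤ)) (-(k:ℤ)))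
          = (C k l * C l k)^2 := by
        have e : (BtildeQ C jm jp eps (-(k:ℤ)) (-(l:ℤ)) * BtildeQ C jm jp eps ((k:ℤ)) ((l:ℤ))
            - BtildeQ C jm jp eps (-(k:ℤ)) ((l:ℤ)) * BtildeQ C jm jp eps ((k:ℤ)) (-(l:ℤ)))
            * (BtildeQ C jm jp eps (-(l:ℤ)) (-(k:ℤ)) * BtildeQ C jm jp eps ((l:ℤ)) ((k:ℤ))
            - BtildeQ C jm jp eps (-(l:ℤ)) ((k:ℤ)) * BtildeQ C jm jp eps ((l:ℤ)) (-(k:ℤ)))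
            = (BtildeQ C jm jp eps (-(k:ℤ)) (-(l:ℤ)) * BtildeQ C jm jp eps ((l:ℤ)) (-(k:ℤ))
              - BtildeQ C jm jp eps (-(k:ℤ)) ((l:ℤ)) * BtildeQ C jm jp eps (-(l:ℤ)) (-(k:ℤ)))
            * (BtildeQ C jm jp eps ((k:ℤ)) (-(l:ℤ)) * BtildeQ C jm jp eps ((l:ℤ)) ((k:ℤ))
              - BtildeQ C jm jp eps ((k:ℤ)) ((l:ℤ)) * BtildeQ C jm jp eps (-(l:ℤ)) ((k:ℤ)))
            - (BtildeQ C jm jp eps (-(k:ℤ)) (-(l:ℤ)) * BtildeQ C jm jp eps ((l:ℤ)) ((k:ℤ))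
              - BtildeQ C jm jp eps (-(k:ℤ)) ((l:ℤ)) * BtildeQ C jm jp eps (-(l:ℤ)) ((k:ℤ)))
            * (BtildeQ C jm jp eps ((k:ℤ)) (-(l:ℤ)) * BtildeQ C jm jp eps ((l:ℤ)) (-(k:ℤ))
              - BtildeQ C jm jp eps ((k:ℤ)) ((l:ℤ)) * BtildeQ C jm jp eps (-(l:ℤ)) (-(k:ℤ))) := by
          ring
        rw [e, hK1, hK2, hK3, hK4]
        rcases hepsl with h1|h1 <;> rcases hepsk with h2|h2 <;> rw [h1, h2] <;> ring
      have hDHne : (BtildeQ C jm jp eps (-(k:ℤ)) (-(l:ℤ)) * BtildeQ C jm jp eps ((k:ℤ)) ((l:ℤ))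
          - BtildeQ C jm jp eps (-(k:ℤ)) ((l:ℤ)) * BtildeQ C jm jp eps ((k:ℤ)) (-(l:ℤ))) ≠ 0 := by
        intro h0
        rw [h0, zero_mul] at hprod
        exact (pow_ne_zero 2 hcc) hprod.symm
      have hvl : v ((l:ℤ)) = 0 := by
        have h2 : (BtildeQ C jm jp eps (-(k:ℤ)) (-(l:ℤ)) * BtildeQ C jm jp eps ((k:ℤ)) ((l:ℤ))
            - BtildeQ C jm jp eps (-(k:ℤ)) ((l:ℤ)) * BtildeQ C jm jp eps ((k:ℤ)) (-(l:ℤ)))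
            * v ((l:ℤ)) = 0 := by
          linear_combination BtildeQ C jm jp eps (-(k:ℤ)) (-(l:ℤ)) * q2
            - BtildeQ C jm jp eps ((k:ℤ)) (-(l:ℤ)) * q1
        rcases mul_eq_zero.mp h2 with h'|h'
        · exact absurd h' hDHne
        · exact h'
      have hvnl : v (-(l:ℤ)) = 0 := by
        have h2 : (BtildeQ C jm jp eps (-(k:ℤ)) (-(l:ℤ)) * BtildeQ C jm jp eps ((k:ℤ)) ((l:ℤ))
            - BtildeQ C jm jp eps (-(k:ℤ)) ((l:ℤ)) * BtildeQ C jm jp eps ((k:ℤ)) (-(l:ℤ)))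
            * v (-(l:ℤ)) = 0 := by
          linear_combination BtildeQ C jm jp eps ((k:ℤ)) ((l:ℤ)) * q1
            - BtildeQ C jm jp eps (-(k:ℤ)) ((l:ℤ)) * q2
        rcases mul_eq_zero.mp h2 with h'|h'
        · exact absurd h' hDHne
        · exact h'
      by_cases hal : a.natAbs = l
      · rcases Int.natAbs_eq a with h|h
        · rw [hal] at h; rw [h]; exact hvl
        · rw [hal] at h; rw [h]; exact hvnl
      · by_cases hak : a.natAbs = k
        · rcases Int.natAbs_eq a with h|h
          · rw [hak] at h; rw [h]; exact hvk
          · rw [hak] at h; rw [h]; exact hvnk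
        · exact IH'' a ((hmem'' _).mpr ⟨hak, hal, ha⟩)
    · -- d_l ≠ 0 : eliminate l, modify C at (k,k)
      set C' : ℕ → ℕ → ℚ := fun j m =>
        if j = k ∧ m = k then C k k - C k l * C l k / C l l else C j m with hC'
      have hC'eq : ∀ j m : ℕ, ¬(j = k ∧ m = k) → C' j m = C j m := by
        intro j m h; simp only [hC', if_neg h]
      have hC'kk : C' k k = C k k - C k l * C l k / C l l := by simp [hC']
      have hE : (C k k - C' k k) * C l l = C k l * C l k := by
        rw [hC'kk]; field_simp [hdl]; ring
      set S' := S.erase l with hS'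
      have hsub' : S' ⊆ S := Finset.erase_subset _ _
      have hss' : S' ⊂ S := Finset.erase_ssubset hlS
      have hkS' : k ∈ S' := Finset.mem_erase.mpr ⟨Ne.symm hlk, hkS⟩
      have hmem' : ∀ j, j ∈ S' ↔ (j ≠ l ∧ j ∈ S) := fun j => Finset.mem_erase
      have hel2 : eps l * eps l = 1 := by rcases hepsl with h'|h' <;> rw [h'] <;> norm_num
      have hv' : ∀ b : ℤ, b.natAbs ∈ S' →
          ∑ j ∈ S', (BtildeQ C' jm jp eps b (-(j:ℤ)) * v (-(j:ℤ))
            + BtildeQ C' jm jp eps b ((j:ℤ)) * v ((j:ℤ))) = 0 := by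
        intro b hb
        rcases (hmem' _).mp hb with ⟨hbl, hbS⟩
        by_cases hbk : b.natAbs = k
        · rw [← Finset.add_sum_erase S' _ hkS']
          have hrest : ∑ j ∈ S'.erase k, (BtildeQ C' jm jp eps b (-(j:ℤ)) * v (-(j:ℤ))
              + BtildeQ C' jm jp eps b ((j:ℤ)) * v ((j:ℤ)))
              = ∑ j ∈ S'.erase k, (BtildeQ C jm jp eps b (-(j:ℤ)) * v (-(j:ℤ))
              + BtildeQ C jm jp eps b ((j:ℤ)) * v ((j:ℤ))) := by
            refine Finset.sum_congr rfl (fun j hj => ?_)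
            have hjk : j ≠ k := (Finset.mem_erase.mp hj).1
            rw [BtildeQ_congr (hC'eq _ _ (by simp [hjk])).symm,
              BtildeQ_congr (hC'eq _ _ (by simp [hjk])).symm]
          rw [hrest]
          have h := hv b hbS
          rw [← Finset.add_sum_erase S _ hlS,
            ← Finset.add_sum_erase _ _ hkS'] at h
          rcases Int.natAbs_eq b with hb'|hb'
          · rw [hbk] at hb'; subst hb'
            rw [BtildeQ_pp hk1, BtildeQ_pn hk1 hordk] at h
            rw [BtildeQ_pp (C := C') hk1, BtildeQ_pn (C := C') hk1 hordk]
            have hT : (eps k * (C' k k - C k k) * v (-(k:ℤ))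
                - BtildeQ C jm jp eps ((k:ℤ)) (-(l:ℤ)) * v (-(l:ℤ))
                - BtildeQ C jm jp eps ((k:ℤ)) ((l:ℤ)) * v ((l:ℤ))) * (eps l * C l l) = 0 := by
              linear_combination (-(eps l * eps k * v (-(k:ℤ)))) * hE
                - BtildeQ C jm jp eps ((k:ℤ)) (-(l:ℤ)) * R2
                + BtildeQ C jm jp eps ((k:ℤ)) ((l:ℤ)) * R1
                + v (-(k:ℤ)) * hK3 + v ((k:ℤ)) * hK4
            have hT' : eps k * (C' k k - C k k) * v (-(k:ℤ))
                - BtildeQ C jm jp eps ((k:ℤ)) (-(l:ℤ)) * v (-(l:ℤ))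
                - BtildeQ C jm jp eps ((k:ℤ)) ((l:ℤ)) * v ((l:ℤ)) = 0 := by
              rcases mul_eq_zero.mp hT with h'|h'
              · exact h'
              · exact absurd h' (mul_ne_zero hepsl_ne hdl)
            linear_combination h + hT'
          · rw [hbk] at hb'; subst hb'
            rw [show ((-(k:ℤ)).natAbs) = k from by simp] at hbk
            rw [BtildeQ_nn hk1, BtildeQ_np hk1 hordk] at h
            rw [BtildeQ_nn (C := C') hk1, BtildeQ_np (C := C') hk1 hordk]
            have hT : (eps k * (C k k - C' k k) * v ((k:ℤ))
                - BtildeQ C jm jp eps (-(k:ℤ)) (-(l:ℤ)) * v (-(l:ℤ))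
                - BtildeQ C jm jp eps (-(k:ℤ)) ((l:ℤ)) * v ((l:ℤ))) * (eps l * C l l) = 0 := by
              linear_combination (eps l * eps k * v ((k:ℤ))) * hE
                - BtildeQ C jm jp eps (-(k:ℤ)) (-(l:ℤ)) * R2
                + BtildeQ C jm jp eps (-(k:ℤ)) ((l:ℤ)) * R1
                + v (-(k:ℤ)) * hK1 + v ((k:ℤ)) * hK2
            have hT' : eps k * (C k k - C' k k) * v ((k:ℤ))
                - BtildeQ C jm jp eps (-(k:ℤ)) (-(l:ℤ)) * v (-(l:ℤ))
                - BtildeQ C jm jp eps (-(k:ℤ)) ((l:ℤ)) * v ((l:ℤ)) = 0 := by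
              rcases mul_eq_zero.mp hT with h'|h'
              · exact h'
              · exact absurd h' (mul_ne_zero hepsl_ne hdl)
            linear_combination h + hT'
        · have hrest : ∑ j ∈ S', (BtildeQ C' jm jp eps b (-(j:ℤ)) * v (-(j:ℤ))
              + BtildeQ C' jm jp eps b ((j:ℤ)) * v ((j:ℤ)))
              = ∑ j ∈ S', (BtildeQ C jm jp eps b (-(j:ℤ)) * v (-(j:ℤ))
              + BtildeQ C jm jp eps b ((j:ℤ)) * v ((j:ℤ))) := by
            refine Finset.sum_congr rfl (fun j hj => ?_)
            rw [BtildeQ_congr (hC'eq _ _ (by simp [hbk])).symm,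
              BtildeQ_congr (hC'eq _ _ (by simp [hbk])).symm]
          rw [hrest]
          have h := hv b hbS
          rw [← Finset.add_sum_erase S _ hlS] at h
          rw [hent0 b l ((hnbr _ hbS hbl hbk).2)] at h
          rw [← hS'] at h
          linear_combination h
      have hzero' : ∀ j ∈ S', ∀ m ∈ S', (C' j m = 0 ↔ C' m j = 0) := by
        intro j hj m hm
        by_cases hjm : j = m
        · subst hjm; exact Iff.rfl
        · rw [hC'eq j m (fun hh => hjm (hh.1.trans hh.2.symm)),
            hC'eq m j (fun hh => hjm (hh.2.trans hh.1.symm))]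
          exact hzero j (hsub' hj) m (hsub' hm)
      have hacyc' : (graphOf S' C').IsAcyclic := by
        refine acyclic_mono ?_ hacyc
        intro x y hxy
        obtain ⟨h1, h2, h3, h4⟩ := hxy
        refine ⟨h1, hsub' h2, hsub' h3, ?_⟩
        rw [hC'eq x y (fun hh => h1 (hh.1.trans hh.2.symm)),
          hC'eq y x (fun hh => h1 (hh.2.trans hh.1.symm))] at h4
        exact h4
      have hCinj' : ∀ u : ℕ → ℚ,
          (∀ j ∈ S', ∑ k' ∈ S', C' j k' * u k' = 0) → ∀ j ∈ S', u j = 0 := by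
        intro u hu
        set u' : ℕ → ℚ := fun m => if m = l then -(C l k / C l l) * u k else u m with hu'
        have hu'S' : ∀ m ∈ S', u' m = u m := by
          intro m hm
          rcases (hmem' _).mp hm with ⟨hml, _⟩
          simp [hu', hml]
        have hrows : ∀ j ∈ S, ∑ m ∈ S, C j m * u' m = 0 := by
          intro j hj
          have hsplitC : ∑ m ∈ S, C j m * u' m
              = C j l * u' l + ∑ m ∈ S', C j m * u' m := by
            rw [← Finset.add_sum_erase S _ hlS, hS']
          have hu'l : u' l = -(C l k / C l l) * u k := by simp [hu']
          have hsum' : ∑ m ∈ S', C j m * u' m = ∑ m ∈ S', C j m * u m :=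
            Finset.sum_congr rfl (fun m hm => by rw [hu'S' m hm])
          rw [hsplitC, hu'l, hsum']
          by_cases hjl : j = l
          · rw [hjl]
            rw [← Finset.add_sum_erase S' _ hkS']
            have hzs : ∑ m ∈ S'.erase k, C l m * u m = 0 :=
              Finset.sum_eq_zero (fun m hm => by
                have hmS : m ∈ S := hsub' (Finset.mem_of_mem_erase hm)
                have hmk : m ≠ k := (Finset.mem_erase.mp hm).1
                have hml : m ≠ l := (Finset.mem_erase.mp (Finset.mem_of_mem_erase hm)).1
                rw [(hnbr m hmS hml hmk).1]; ring)
            rw [hzs]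
            field_simp [hdl]
            ring
          · have hC'row : ∑ m ∈ S', C j m * u m
                = ∑ m ∈ S', C' j m * u m + (C j k - C' j k) * u k := by
              rw [← Finset.add_sum_erase S' (fun m => C j m * u m) hkS',
                ← Finset.add_sum_erase S' (fun m => C' j m * u m) hkS']
              have hcg : ∑ m ∈ S'.erase k, C j m * u m
                  = ∑ m ∈ S'.erase k, C' j m * u m :=
                Finset.sum_congr rfl (fun m hm => by
                  rw [hC'eq j m (fun hh => (Finset.mem_erase.mp hm).1 hh.2)])
              rw [hcg]
              ring
            rw [hC'row]
            by_cases hjk : j = k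
            · rw [hjk]
              rw [hu k hkS']
              have hck : C k k - C' k k = C k l * C l k / C l l := by
                rw [hC'kk]; ring
              rw [hck]
              field_simp [hdl]
              ring
            · rw [hC'eq j k (fun hh => hjk hh.1)]
              rw [(hnbr j hj hjl hjk).2]
              rw [hu j ((hmem' _).mpr ⟨hjl, hj⟩)]
              ring
        intro j hj
        have := hCinj u' hrows j (hsub' hj)
        rwa [hu'S' j hj] at this
      have IH' := IH S' hss' C'
        (fun j hj => hge1 j (hsub' hj)) (fun j hj => heps j (hsub' hj))
        (fun j hj => hord j (hsub' hj))
        (fun j hj k' hk' => hdisj j (hsub' hj) k' (hsub' hk'))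
        hzero' hacyc' hCinj' v hv'
      have hvk : v ((k:ℤ)) = 0 := IH' ((k:ℤ)) (by simpa using hkS')
      have hvnk : v (-(k:ℤ)) = 0 := IH' (-(k:ℤ)) (by simpa using hkS')
      have hvl : v ((l:ℤ)) = 0 := by
        rw [hvk, hvnk] at R1
        have h2 : eps l * C l l * v ((l:ℤ)) = 0 := by linear_combination -R1
        rcases mul_eq_zero.mp h2 with h'|h'
        · exact absurd h' (mul_ne_zero hepsl_ne hdl)
        · exact h'
      have hvnl : v (-(l:ℤ)) = 0 := by
        rw [hvk, hvnk] at R2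
        have h2 : eps l * C l l * v (-(l:ℤ)) = 0 := by linear_combination R2
        rcases mul_eq_zero.mp h2 with h'|h'
        · exact absurd h' (mul_ne_zero hepsl_ne hdl)
        · exact h'
      by_cases hal : a.natAbs = l
      · rcases Int.natAbs_eq a with h|h
        · rw [hal] at h; rw [h]; exact hvl
        · rw [hal] at h; rw [h]; exact hvnl
      · exact IH' a ((hmem' _).mpr ⟨hal, ha⟩)
  · -- l is isolated
    push_neg at hnb
    have hz : ∀ j ∈ S, j ≠ l → C l j = 0 ∧ C j l = 0 := by
      intro j hj hjl
      have : ¬ (C l j ≠ 0 ∨ C j l ≠ 0) := fun hc => hnb j ⟨Ne.symm hjl, hlS, hj, hc⟩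
      rcases not_or.mp this with ⟨h1, h2⟩
      exact ⟨not_not.mp h1, not_not.mp h2⟩
    have hdl : C l l ≠ 0 := by
      intro h0
      have hrows : ∀ j ∈ S, ∑ k' ∈ S, C j k' * (if k' = l then (1:ℚ) else 0) = 0 := by
        intro j hj
        rw [Finset.sum_eq_single_of_mem l hlS (fun m _ hml => by simp [hml])]
        by_cases hjl : j = l
        · subst hjl; simp [h0]
        · simp [(hz j hj hjl).2]
      have h1 := hCinj _ hrows l hlS
      simp at h1
    have hrowl : ∀ b : ℤ, b.natAbs = l →
        ∑ j ∈ S, (BtildeQ C jm jp eps b (-(j:ℤ)) * v (-(j:ℤ))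
          + BtildeQ C jm jp eps b ((j:ℤ)) * v ((j:ℤ)))
        = BtildeQ C jm jp eps b (-(l:ℤ)) * v (-(l:ℤ))
          + BtildeQ C jm jp eps b ((l:ℤ)) * v ((l:ℤ)) := by
      intro b hb
      refine Finset.sum_eq_single_of_mem l hlS (fun j hj hjl => ?_)
      exact hent0 b j (by rw [hb]; exact (hz j hj hjl).1)
    have hvl : v ((l:ℤ)) = 0 := by
      have h := hv (-(l:ℤ)) (by simpa using hlS)
      rw [hrowl _ (by simp)] at h
      rw [BtildeQ_nn hl1, BtildeQ_np hl1 hordl] at h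
      have h2 : eps l * C l l * v ((l:ℤ)) = 0 := by linear_combination -h
      rcases mul_eq_zero.mp h2 with h'|h'
      · exact absurd h' (mul_ne_zero hepsl_ne hdl)
      · exact h'
    have hvnl : v (-(l:ℤ)) = 0 := by
      have h := hv ((l:ℤ)) (by simpa using hlS)
      rw [hrowl _ (by simp)] at h
      rw [BtildeQ_pp hl1, BtildeQ_pn hl1 hordl] at h
      have h2 : eps l * C l l * v (-(l:ℤ)) = 0 := by linear_combination h
      rcases mul_eq_zero.mp h2 with h'|h'
      · exact absurd h' (mul_ne_zero hepsl_ne hdl)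
      · exact h'
    set S' := S.erase l with hS'
    have hsub' : S' ⊆ S := Finset.erase_subset _ _
    have hss' : S' ⊂ S := Finset.erase_ssubset hlS
    have hmem' : ∀ j, j ∈ S' ↔ (j ≠ l ∧ j ∈ S) := fun j => Finset.mem_erase
    have hv' : ∀ b : ℤ, b.natAbs ∈ S' →
        ∑ j ∈ S', (BtildeQ C jm jp eps b (-(j:ℤ)) * v (-(j:ℤ))
          + BtildeQ C jm jp eps b ((j:ℤ)) * v ((j:ℤ))) = 0 := by
      intro b hb
      rcases (hmem' _).mp hb with ⟨hbl, hbS⟩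
      have h := hv b hbS
      rw [← Finset.add_sum_erase S _ hlS] at h
      rw [hent0 b l ((hz _ hbS hbl).2)] at h
      rw [← hS'] at h
      linear_combination h
    have hCinj' : ∀ u : ℕ → ℚ,
        (∀ j ∈ S', ∑ k' ∈ S', C j k' * u k' = 0) → ∀ j ∈ S', u j = 0 := by
      intro u hu
      set u' : ℕ → ℚ := fun m => if m = l then 0 else u m with hu'
      have hu'S' : ∀ m ∈ S', u' m = u m := by
        intro m hm
        simp [hu', (Finset.mem_erase.mp hm).1]
      have hrows : ∀ j ∈ S, ∑ m ∈ S, C j m * u' m = 0 := by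
        intro j hj
        rw [← Finset.add_sum_erase S _ hlS]
        have hsum' : ∑ m ∈ S.erase l, C j m * u' m = ∑ m ∈ S.erase l, C j m * u m :=
          Finset.sum_congr rfl (fun m hm => by rw [hu'S' m (by rw [hS']; exact hm)])
        rw [hsum']
        have hu'l : u' l = 0 := by simp [hu']
        rw [hu'l]
        by_cases hjl : j = l
        · subst hjl
          rw [Finset.sum_eq_zero (fun m hm => by
            rw [(hz m (hsub' hm) (Finset.mem_erase.mp hm).1).1]; ring)]
          ring
        · rw [hu j ((hmem' _).mpr ⟨hjl, hj⟩)]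
          ring
      intro j hj
      have := hCinj u' hrows j (hsub' hj)
      rwa [hu'S' j hj] at this
    have hle' : graphOf S' C ≤ graphOf S C := by
      intro x y hxy
      obtain ⟨h1, h2, h3, h4⟩ := hxy
      exact ⟨h1, hsub' h2, hsub' h3, h4⟩
    have IH' := IH S' hss' C
      (fun j hj => hge1 j (hsub' hj)) (fun j hj => heps j (hsub' hj))
      (fun j hj => hord j (hsub' hj))
      (fun j hj k' hk' => hdisj j (hsub' hj) k' (hsub' hk'))
      (fun j hj k' hk' => hzero j (hsub' hj) k' (hsub' hk'))
      (acyclic_mono hle' hacyc) hCinj' v hv'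
    by_cases hal : a.natAbs = l
    · rcases Int.natAbs_eq a with h|h
      · rw [hal] at h; rw [h]; exact hvl
      · rw [hal] at h; rw [h]; exact hvnl
    · exact IH' a ((hmem' _).mpr ⟨hal, ha⟩)

lemma sum_shift (r : ℕ) (h : ℕ → ℚ) :
    ∑ m ∈ Finset.range r, h (m + 1) = ∑ j ∈ Finset.Icc 1 r, h j := by
  rw [← Finset.Ico_add_one_right_eq_Icc, Finset.sum_Ico_eq_sum_range]
  simp [add_comm]

lemma sum_iota (r : ℕ) (f : ℤ → ℚ) :
    ∑ q : Fin (2*r), f (iotaI r q) = ∑ j ∈ Finset.Icc 1 r, (f (-(j:ℤ)) + f (j:ℤ)) := by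
  have h1 : ∑ q : Fin (2*r), f (iotaI r q)
      = ∑ i ∈ Finset.range (2*r),
        f (if i < r then -((i:ℤ)+1) else ((i - r : ℕ) : ℤ) + 1) := by
    rw [← Fin.sum_univ_eq_sum_range (fun i =>
      f (if i < r then -((i:ℤ)+1) else ((i - r : ℕ) : ℤ) + 1)) (2*r)]
    exact Finset.sum_congr rfl (fun q _ => rfl)
  rw [h1, two_mul, Finset.sum_range_add]
  have h2 : ∑ i ∈ Finset.range r,
      f (if i < r then -((i:ℤ)+1) else ((i - r : ℕ) : ℤ) + 1)
      = ∑ j ∈ Finset.Icc 1 r, f (-(j:ℤ)) := by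
    rw [← sum_shift r (fun j => f (-(j:ℤ)))]
    refine Finset.sum_congr rfl (fun i hi => ?_)
    rw [if_pos (Finset.mem_range.mp hi)]
    congr 1
    try push_cast
    try ring
  have h3 : ∑ i ∈ Finset.range r,
      f (if r + i < r then -(((r + i : ℕ):ℤ)+1) else ((r + i - r : ℕ) : ℤ) + 1)
      = ∑ j ∈ Finset.Icc 1 r, f ((j:ℤ)) := by
    rw [← sum_shift r (fun j => f ((j:ℤ)))]
    refine Finset.sum_congr rfl (fun i hi => ?_)
    rw [if_neg (by omega)]
    congr 1
    have : r + i - r = i := by omega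
    rw [this]
    try push_cast
    try ring
  rw [h2, h3, ← Finset.sum_add_distrib]


/-- Corollary 3.11(2): if `C` is invertible over `ℚ` and its Coxeter graph is a forest,
then the `2r × 2r` exchange matrix `B̃_𝐢` of every Coxeter double word has full rank,
i.e. is invertible over `ℚ`. -/
theorem stmt_18 (r : ℕ) (hr : 1 ≤ r) (C : ℕ → ℕ → ℤ) (hC : IsGCM r C)
    (hCinv : IsUnit (Matrix.of fun p q : Fin r => (C ((p : ℕ) + 1) ((q : ℕ) + 1) : ℚ)))
    (hforest : (coxGraph r C).IsAcyclic)
    (w : ℕ → ℤ) (hw : IsCoxWord r w)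
    (jm jp : ℕ → ℕ) (eps : ℕ → ℚ) (hpos : PosData r w jm jp eps) :
    IsUnit (Matrix.of fun p q : Fin (2 * r) =>
      Btilde C jm jp eps (iotaI r p) (iotaI r q)) := by
  set Cq : ℕ → ℕ → ℚ := fun j k => (C j k : ℚ) with hCq
  set S : Finset ℕ := Finset.Icc 1 r with hS
  have hmemS : ∀ j, j ∈ S ↔ (1 ≤ j ∧ j ≤ r) := fun j => Finset.mem_Icc
  -- data hypotheses
  have hge1 : ∀ j ∈ S, 1 ≤ j := fun j hj => ((hmemS j).mp hj).1
  have hepsS : ∀ j ∈ S, eps j = 1 ∨ eps j = -1 := by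
    intro j hj
    rcases (hmemS j).mp hj with ⟨h1, h2⟩
    rcases (hpos j h1 h2).2.2.2.2.2 with h
    by_cases hw0 : 0 < w (jm j)
    · left; rw [h, if_pos hw0]
    · right; rw [h, if_neg hw0]
  have hordS : ∀ j ∈ S, jm j < jp j := by
    intro j hj
    rcases (hmemS j).mp hj with ⟨h1, h2⟩
    exact (hpos j h1 h2).2.1
  have hdisjS : ∀ j ∈ S, ∀ k ∈ S, j ≠ k →
      jm j ≠ jm k ∧ jm j ≠ jp k ∧ jp j ≠ jm k ∧ jp j ≠ jp k := by
    intro j hj k hk hjk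
    rcases (hmemS j).mp hj with ⟨hj1, hj2⟩
    rcases (hmemS k).mp hk with ⟨hk1, hk2⟩
    obtain ⟨_, _, _, hwj1, hwj2, _⟩ := hpos j hj1 hj2
    obtain ⟨_, _, _, hwk1, hwk2, _⟩ := hpos k hk1 hk2
    refine ⟨?_, ?_, ?_, ?_⟩ <;> intro he
    · rw [he, hwk1] at hwj1; exact hjk hwj1.symm
    · rw [he, hwk2] at hwj1; exact hjk hwj1.symm
    · rw [he, hwk1] at hwj2; exact hjk hwj2.symm
    · rw [he, hwk2] at hwj2; exact hjk hwj2.symm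
  have hzeroS : ∀ j ∈ S, ∀ k ∈ S, (Cq j k = 0 ↔ Cq k j = 0) := by
    intro j hj k hk
    rcases (hmemS j).mp hj with ⟨hj1, hj2⟩
    rcases (hmemS k).mp hk with ⟨hk1, hk2⟩
    have := hC.2.2 j k hj1 hj2 hk1 hk2
    simp only [hCq, Int.cast_eq_zero]
    exact this
  have hacycS : (graphOf S Cq).IsAcyclic := by
    refine acyclic_mono ?_ hforest
    intro x y hxy
    obtain ⟨h1, h2, h3, h4⟩ := hxy
    rcases (hmemS x).mp h2 with ⟨hx1, hx2⟩
    rcases (hmemS y).mp h3 with ⟨hy1, hy2⟩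
    refine ⟨h1, hx1, hx2, hy1, hy2, ?_⟩
    rcases h4 with h|h
    · exact Or.inl (fun h0 => h (by simp [hCq, h0]))
    · exact Or.inr (fun h0 => h (by simp [hCq, h0]))
  have hCdet : (Matrix.of fun p q : Fin r => (C ((p : ℕ) + 1) ((q : ℕ) + 1) : ℚ)).det ≠ 0 := by
    intro h0
    have := (Matrix.isUnit_iff_isUnit_det _).mp hCinv
    rw [h0] at this
    exact (by simpa using this : False)
  have hCinjS : ∀ u : ℕ → ℚ, (∀ j ∈ S, ∑ k ∈ S, Cq j k * u k = 0) → ∀ j ∈ S, u j = 0 := by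
    intro u hu j hj
    rcases (hmemS j).mp hj with ⟨hj1, hj2⟩
    set vC : Fin r → ℚ := fun p => u ((p : ℕ) + 1) with hvC
    have hmv : (Matrix.of fun p q : Fin r => (C ((p : ℕ) + 1) ((q : ℕ) + 1) : ℚ)).mulVec vC = 0 := by
      funext p
      have h1 : (Matrix.of fun p q : Fin r => (C ((p : ℕ) + 1) ((q : ℕ) + 1) : ℚ)).mulVec vC p
          = ∑ q : Fin r, (C ((p : ℕ) + 1) ((q : ℕ) + 1) : ℚ) * u ((q : ℕ) + 1) := by
        simp [Matrix.mulVec, dotProduct, hvC]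
      rw [h1]
      have h2 : ∑ q : Fin r, (C ((p : ℕ) + 1) ((q : ℕ) + 1) : ℚ) * u ((q : ℕ) + 1)
          = ∑ m ∈ Finset.range r, (C ((p : ℕ) + 1) (m + 1) : ℚ) * u (m + 1) := by
        rw [← Fin.sum_univ_eq_sum_range (fun m => (C ((p : ℕ) + 1) (m + 1) : ℚ) * u (m + 1)) r]
      rw [h2, sum_shift r (fun k => (C ((p : ℕ) + 1) k : ℚ) * u k)]
      have hp : (p : ℕ) + 1 ∈ S := (hmemS _).mpr ⟨by omega, by omega⟩
      exact hu _ hp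
    have hvC0 : vC = 0 := by
      by_contra hne
      exact hCdet (Matrix.exists_mulVec_eq_zero_iff.mp ⟨vC, hne, hmv⟩)
    have hcf : vC ⟨j - 1, by omega⟩ = 0 := by rw [hvC0]; rfl
    have hcf' : u ((j - 1) + 1) = 0 := hcf
    have hj' : (j - 1) + 1 = j := by omega
    rwa [hj'] at hcf'
  -- now the main matrix
  rw [Matrix.isUnit_iff_isUnit_det]
  rw [isUnit_iff_ne_zero]
  intro hdet0
  obtain ⟨vv, hvvne, hvv0⟩ := Matrix.exists_mulVec_eq_zero_iff.mpr hdet0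
  -- transfer the kernel vector to ℤ-indexed form
  set vt : ℤ → ℚ := fun b =>
    if h : (if b < 0 then b.natAbs - 1 else r + b.natAbs - 1) < 2 * r
    then vv ⟨(if b < 0 then b.natAbs - 1 else r + b.natAbs - 1), h⟩ else 0 with hvt
  have hvt_iota : ∀ q : Fin (2*r), vt (iotaI r q) = vv q := by
    intro q
    have hidx : (if iotaI r q < 0 then (iotaI r q).natAbs - 1
        else r + (iotaI r q).natAbs - 1) = (q : ℕ) := by
      rcases Nat.lt_or_ge (q : ℕ) r with hq | hq
      · have h1 : iotaI r q = -(((q : ℕ) : ℤ) + 1) := by simp only [iotaI, if_pos hq]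
        rw [h1, if_pos (by omega)]
        omega
      · have h1 : iotaI r q = (((q : ℕ) - r : ℕ) : ℤ) + 1 := by
          simp only [iotaI, if_neg (by omega : ¬ ((q:ℕ) < r))]
        rw [h1, if_neg (by omega)]
        omega
    rw [hvt]
    simp only [hidx]
    simp
  have hrows : ∀ b : ℤ, b.natAbs ∈ S →
      ∑ j ∈ S, (BtildeQ Cq jm jp eps b (-(j:ℤ)) * vt (-(j:ℤ))
        + BtildeQ Cq jm jp eps b ((j:ℤ)) * vt ((j:ℤ))) = 0 := by
    intro b hb
    rcases (hmemS _).mp hb with ⟨hb1, hb2⟩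
    have hbne : b ≠ 0 := by intro h; rw [h] at hb1; simp at hb1
    -- index of b
    have hidx : (if b < 0 then b.natAbs - 1 else r + b.natAbs - 1) < 2 * r := by
      by_cases h : b < 0 <;> simp [h] <;> omega
    set p : Fin (2*r) := ⟨(if b < 0 then b.natAbs - 1 else r + b.natAbs - 1), hidx⟩ with hp
    have hpb : iotaI r p = b := by
      by_cases h : b < 0
      · have hv : (p : ℕ) = b.natAbs - 1 := by
          show (if b < 0 then b.natAbs - 1 else r + b.natAbs - 1) = b.natAbs - 1
          rw [if_pos h]
        have hlt : (p : ℕ) < r := by rw [hv]; omega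
        simp only [iotaI, if_pos hlt]
        rw [hv]
        omega
      · have hv : (p : ℕ) = r + b.natAbs - 1 := by
          show (if b < 0 then b.natAbs - 1 else r + b.natAbs - 1) = r + b.natAbs - 1
          rw [if_neg h]
        have hge : ¬ ((p : ℕ) < r) := by rw [hv]; omega
        simp only [iotaI, if_neg hge]
        rw [hv]
        omega
    have hrow := congrFun hvv0 p
    have h1 : (Matrix.of fun p q : Fin (2 * r) =>
        Btilde C jm jp eps (iotaI r p) (iotaI r q)).mulVec vv p
        = ∑ q : Fin (2*r), BtildeQ Cq jm jp eps b (iotaI r q) * vt (iotaI r q) := by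
      simp only [Matrix.mulVec, dotProduct, Matrix.of_apply]
      refine Finset.sum_congr rfl (fun q _ => ?_)
      rw [hpb, hvt_iota q]
      rfl
    rw [h1] at hrow
    rw [sum_iota r (fun b' => BtildeQ Cq jm jp eps b b' * vt b')] at hrow
    exact hrow
  have hall := key jm jp eps S Cq hge1 hepsS hordS hdisjS hzeroS hacycS hCinjS vt hrows
  apply hvvne
  funext q
  have h1 : (iotaI r q).natAbs ∈ S := by
    rw [hmemS]
    rw [iotaI]
    by_cases h : (q : ℕ) < r
    · rw [if_pos h]; constructor <;> omega
    · rw [if_neg h]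
      have := q.2
      constructor <;> omega
  have := hall (iotaI r q) h1
  rw [hvt_iota q] at this
  rw [this]
  rfl
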